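/- Let φ ∈ ℝ, δ ∈ [0, 2], and λ₀, λ₁, λ₂ ∈ ℂ satisfy λ₀ λ₁ λ₂ = 1, |λ₀ − e^{iφ}| ≤ δ, |λ₁ − λ₀| ≤ δ, and |λ₂ − λ₀| ≤ δ. Then |e^{3iφ} − 1| ≤ 37 δ. -/

import Mathlib

theorem stmt8 (φ δ : ℝ) (hδ0 : 0 ≤ δ) (hδ2 : δ ≤ 2) (lam₀ lam₁ lam₂ : ℂ)
    (hprod : lam₀ * lam₁ * lam₂ = 1)
    (h0 : ‖lam₀ - Complex.exp (Complex.I * (φ : ℂ))‖ ≤ δ)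
    (h1 : ‖lam₁ - lam₀‖ ≤ δ)
    (h2 : ‖lam₂ - lam₀‖ ≤ δ) :
    ‖Complex.exp (3 * Complex.I * (φ : ℂ)) - 1‖ ≤ 37 * δ := by
  set e := Complex.exp (Complex.I * (φ : ℂ)) with he_def
  have he : ‖e‖ = 1 := by
    simp [he_def, Complex.norm_exp]
  have hexp3 : Complex.exp (3 * Complex.I * (φ : ℂ)) = e ^ 3 := by
    rw [he_def, ← Complex.exp_nat_mul]
    ring_nf
  have h0' : ‖e - lam₀‖ ≤ δ := by
    rw [← norm_neg]; simpa using h0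
  have h1' : ‖e - lam₁‖ ≤ 2 * δ := by
    calc ‖e - lam₁‖ = ‖(e - lam₀) + (lam₀ - lam₁)‖ := by ring_nf
    _ ≤ ‖e - lam₀‖ + ‖lam₀ - lam₁‖ := norm_add_le _ _
    _ ≤ δ + δ := by
        refine add_le_add h0' ?_
        rw [← norm_neg]; simpa using h1
    _ = 2 * δ := by ring
  have h2' : ‖e - lam₂‖ ≤ 2 * δ := by
    calc ‖e - lam₂‖ = ‖(e - lam₀) + (lam₀ - lam₂)‖ := by ring_nf
    _ ≤ ‖e - lam₀‖ + ‖lam₀ - lam₂‖ := norm_add_le _ _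
    _ ≤ δ + δ := by
        refine add_le_add h0' ?_
        rw [← norm_neg]; simpa using h2
    _ = 2 * δ := by ring
  have hl0 : ‖lam₀‖ ≤ 3 := by
    calc ‖lam₀‖ = ‖e + (lam₀ - e)‖ := by ring_nf
    _ ≤ ‖e‖ + ‖lam₀ - e‖ := norm_add_le _ _
    _ ≤ 1 + δ := by rw [he]; exact add_le_add le_rfl h0
    _ ≤ 3 := by linarith
  have hl1 : ‖lam₁‖ ≤ 5 := by
    have : ‖lam₁‖ = ‖e + -(e - lam₁)‖ := by ring_nf
    rw [this]
    refine (norm_add_le _ _).trans ?_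
    rw [norm_neg, he]
    linarith
  have key : Complex.exp (3 * Complex.I * (φ : ℂ)) - 1 =
      (e - lam₀) * e ^ 2 + lam₀ * (e - lam₁) * e + lam₀ * lam₁ * (e - lam₂) := by
    rw [hexp3, ← hprod]; ring
  rw [key]
  have habs : ∀ z w : ℂ, ‖z * w‖ = ‖z‖ * ‖w‖ :=
    fun z w => norm_mul z w
  calc ‖(e - lam₀) * e ^ 2 + lam₀ * (e - lam₁) * e + lam₀ * lam₁ * (e - lam₂)‖
      ≤ ‖(e - lam₀) * e ^ 2 + lam₀ * (e - lam₁) * e‖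
        + ‖lam₀ * lam₁ * (e - lam₂)‖ := norm_add_le _ _
    _ ≤ ‖(e - lam₀) * e ^ 2‖ + ‖lam₀ * (e - lam₁) * e‖
        + ‖lam₀ * lam₁ * (e - lam₂)‖ :=
        add_le_add_left (norm_add_le _ _) _
    _ ≤ δ * 1 + 3 * (2 * δ) * 1 + 3 * 5 * (2 * δ) := by
        refine add_le_add (add_le_add ?_ ?_) ?_
        · rw [habs, norm_pow, he]; simpa using h0'
        · rw [habs, habs, he]
          have := mul_le_mul hl0 h1' (norm_nonneg _) (by norm_num : (0:ℝ) ≤ 3)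
          nlinarith [norm_nonneg (e - lam₁)]
        · rw [habs, habs]
          have hh : ‖lam₀‖ * ‖lam₁‖ ≤ 3 * 5 :=
            mul_le_mul hl0 hl1 (norm_nonneg _) (by norm_num)
          have := mul_le_mul hh h2' (norm_nonneg _) (by norm_num : (0:ℝ) ≤ 3 * 5)
          linarith
    _ ≤ 37 * δ := by linarith
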